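/- Convergence of the full marked first-passage pair for deterministic paths: let $\bm{x}_n \to \bm{y}$ componentwise locally uniformly, $\bm{y}$ continuous, $y_j(0) < B_j$ and $T_{B_j}(y_j)=\widetilde{T}_{B_j}(y_j) < \infty$ for all $j$, and suppose the values $T_{B_1}(y_1), \dots, T_{B_k}(y_k)$ are pairwise distinct. Then the sorted sequence of the $k$ crossing times of $\bm{x}_n$ together with the indices of the crossing components converges to the sorted sequence of crossing times of $\bm{y}$ with its indices: for each $m \in \{1,\dots,k\}$, the $m$-th smallest crossing time of $\bm{x}_n$ converges to the $m$-th smallest crossing time of $\bm{y}$, and the corresponding crossing index agrees with that of $\bm{y}$ for $n$ sufficiently large. -/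
import Mathlib


open Filter Set

/-- First passage time of `f` above level `B`. -/
noncomputable def FPT (f : ℝ → ℝ) (B : ℝ) : ℝ := sInf {t : ℝ | 0 < t ∧ B < f t}

/-- Hitting time of `f` at level `B`. -/
noncomputable def HT (f : ℝ → ℝ) (B : ℝ) : ℝ := sInf {t : ℝ | 0 < t ∧ f t = B}

/-- A real function is càdlàg on `[0,∞)`. -/
def Cadlag (f : ℝ → ℝ) : Prop :=
  (∀ t : ℝ, 0 ≤ t → ContinuousWithinAt f (Set.Ici t) t) ∧
  (∀ t : ℝ, 0 < t → ∃ L : ℝ, Filter.Tendsto f (nhdsWithin t (Set.Iio t)) (nhds L))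

lemma FPT_nonneg (f : ℝ → ℝ) (B : ℝ) : 0 ≤ FPT f B :=
  Real.sInf_nonneg (fun t ht => ht.1.le)

lemma FPT_tendsto (x : ℕ → ℝ → ℝ) (y : ℝ → ℝ) (B : ℝ)
    (hy : ContinuousOn y (Ici 0)) (hy0 : y 0 < B)
    (hfin : {t : ℝ | 0 < t ∧ B < y t}.Nonempty)
    (hH : FPT y B = HT y B)
    (hconv : ∀ s : ℝ, 0 ≤ s → TendstoUniformlyOn x y atTop (Icc 0 s)) :
    Tendsto (fun n => FPT (x n) B) atTop (nhds (FPT y B)) := by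
  set S : Set ℝ := {t : ℝ | 0 < t ∧ B < y t} with hS
  have hbdd : BddBelow S := ⟨0, fun t ht => ht.1.le⟩
  -- τ > 0
  have hτpos : 0 < FPT y B := by
    have hc : ContinuousWithinAt y (Ici 0) 0 := hy 0 (mem_Ici.2 le_rfl)
    have h1 : ∀ᶠ t in nhdsWithin 0 (Ici 0), y t < B :=
      hc.eventually_lt_const hy0
    rw [Filter.eventually_iff, Metric.mem_nhdsWithin_iff] at h1
    obtain ⟨δ, hδ, hsub⟩ := h1
    have hlb : ∀ t ∈ S, δ ≤ t := by
      intro t ht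
      by_contra h
      push_neg at h
      have : t ∈ Metric.ball (0:ℝ) δ ∩ Ici 0 := by
        constructor
        · simp [Real.dist_eq, abs_of_pos ht.1, h]
        · exact ht.1.le
      exact absurd (hsub this) (not_lt.2 ht.2.le)
    exact lt_of_lt_of_le hδ (le_csInf hfin hlb)
  rw [tendsto_order]
  constructor
  · -- lower bound
    intro a ha
    obtain ⟨s₀, hs₀⟩ := hfin
    set a' : ℝ := max 0 ((a + FPT y B)/2) with ha'def
    have ha'0 : 0 ≤ a' := le_max_left _ _
    have ha'lt : a' < FPT y B := by
      apply max_lt hτpos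
      linarith
    have haa' : a < a' := lt_of_lt_of_le (by linarith) (le_max_right _ _)
    -- y < B on [0, a']
    have hyB : ∀ t ∈ Icc (0:ℝ) a', y t < B := by
      intro t ht
      rcases eq_or_lt_of_le ht.1 with h0 | h0
      · rw [← h0]; exact hy0
      rcases lt_trichotomy (y t) B with h | h | h
      · exact h
      · exfalso
        have : HT y B ≤ t :=
          csInf_le ⟨0, fun u hu => hu.1.le⟩ ⟨h0, h⟩
        rw [← hH] at this
        linarith [lt_of_le_of_lt ht.2 ha'lt]
      · exfalso
        have : FPT y B ≤ t := csInf_le hbdd ⟨h0, h⟩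
        linarith [lt_of_le_of_lt ht.2 ha'lt]
    -- max of y on [0,a'] is < B
    have hcomp : IsCompact (Icc (0:ℝ) a') := isCompact_Icc
    obtain ⟨t₀, ht₀mem, ht₀max⟩ := hcomp.exists_isMaxOn (nonempty_Icc.2 ha'0)
      (hy.mono (Icc_subset_Ici_self))
    set δ : ℝ := min (B - y t₀) (y s₀ - B) with hδdef
    have hδpos : 0 < δ :=
      lt_min (by linarith [hyB t₀ ht₀mem]) (by linarith [hs₀.2])
    have hs₀0 : 0 ≤ s₀ := hs₀.1.le
    set R : ℝ := max a' s₀ with hRdef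
    have hR0 : 0 ≤ R := le_trans ha'0 (le_max_left _ _)
    have := (Metric.tendstoUniformlyOn_iff.1 (hconv R hR0)) δ hδpos
    filter_upwards [this] with n hn
    have hs₀mem : s₀ ∈ Icc (0:ℝ) R := ⟨hs₀0, le_max_right _ _⟩
    have hxs₀ : B < x n s₀ := by
      have := hn s₀ hs₀mem
      rw [Real.dist_eq] at this
      have h2 : y s₀ - x n s₀ < δ := lt_of_le_of_lt (le_abs_self _) this
      have h3 : δ ≤ y s₀ - B := min_le_right _ _
      linarith
    have hne : {t : ℝ | 0 < t ∧ B < x n t}.Nonempty := ⟨s₀, hs₀.1, hxs₀⟩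
    have hlb : ∀ t ∈ {t : ℝ | 0 < t ∧ B < x n t}, a' ≤ t := by
      intro t ht
      by_contra h
      push_neg at h
      have htmem : t ∈ Icc (0:ℝ) R :=
        ⟨ht.1.le, le_trans h.le (le_max_left _ _)⟩
      have := hn t htmem
      rw [Real.dist_eq] at this
      have h2 : x n t - y t < δ := by
        have := neg_lt_of_abs_lt this
        linarith
      have h3 : y t ≤ y t₀ := ht₀max ⟨ht.1.le, h.le⟩
      have h4 : δ ≤ B - y t₀ := min_le_left _ _
      have := ht.2
      linarith
    calc a < a' := haa'
    _ ≤ FPT (x n) B := le_csInf hne hlb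
  · -- upper bound
    intro b hb
    obtain ⟨s, hsS, hsb⟩ := exists_lt_of_csInf_lt hfin hb
    have hs0 : 0 ≤ s := hsS.1.le
    set δ : ℝ := y s - B with hδdef
    have hδpos : 0 < δ := by simp [hδdef]; linarith [hsS.2]
    have := (Metric.tendstoUniformlyOn_iff.1 (hconv s hs0)) δ hδpos
    filter_upwards [this] with n hn
    have := hn s ⟨hs0, le_rfl⟩
    rw [Real.dist_eq] at this
    have h2 : y s - x n s < δ := lt_of_le_of_lt (le_abs_self _) this
    have hxs : B < x n s := by linarith
    have : FPT (x n) B ≤ s :=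
      csInf_le ⟨0, fun u hu => hu.1.le⟩ ⟨hsS.1, hxs⟩
    linarith


/-- convergence of the full marked first-passage pair for
deterministic paths: if `xₙ → y` componentwise locally uniformly, each limit
component hits and crosses its boundary simultaneously at a finite time, and
the limit crossing times are pairwise distinct (ordered by the permutation
`σ`), then for each `m` the `m`-th smallest crossing time of `xₙ` converges to
the `m`-th smallest crossing time of `y` and, for `n` large, the order (hence
the marks, i.e. the crossing indices) of the crossing times of `xₙ` agrees
with that of `y`. -/
theorem marked_crossing_times_convergence
    (k : ℕ) (x : ℕ → Fin k → ℝ → ℝ) (y : Fin k → ℝ → ℝ) (B : Fin k → ℝ)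
    (hx : ∀ n j, Cadlag (x n j))
    (hy : ∀ j, ContinuousOn (y j) (Set.Ici 0))
    (hy0 : ∀ j, y j 0 < B j)
    (hfin : ∀ j, {t : ℝ | 0 < t ∧ B j < y j t}.Nonempty)
    (hH : ∀ j, FPT (y j) (B j) = HT (y j) (B j))
    (hdistinct : ∀ j l : Fin k, j ≠ l → FPT (y j) (B j) ≠ FPT (y l) (B l))
    (hconv : ∀ j, ∀ s : ℝ, 0 ≤ s →
      TendstoUniformlyOn (fun n => x n j) (y j) atTop (Set.Icc 0 s))
    (σ : Equiv.Perm (Fin k))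
    (hσ : StrictMono fun m => FPT (y (σ m)) (B (σ m))) :
    (∀ m : Fin k, Tendsto (fun n => FPT (x n (σ m)) (B (σ m))) atTop
      (nhds (FPT (y (σ m)) (B (σ m))))) ∧
    ∀ᶠ n in atTop, StrictMono fun m => FPT (x n (σ m)) (B (σ m)) := by
  have htend : ∀ m : Fin k, Tendsto (fun n => FPT (x n (σ m)) (B (σ m))) atTop
      (nhds (FPT (y (σ m)) (B (σ m)))) := fun m =>
    FPT_tendsto (fun n => x n (σ m)) (y (σ m)) (B (σ m)) (hy _) (hy0 _)
      (hfin _) (hH _) (hconv _)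
  refine ⟨htend, ?_⟩
  have key : ∀ m m' : Fin k, m < m' → ∀ᶠ n in atTop,
      FPT (x n (σ m)) (B (σ m)) < FPT (x n (σ m')) (B (σ m')) := fun m m' h =>
    (htend m).eventually_lt (htend m') (hσ h)
  have hall : ∀ᶠ n in atTop, ∀ m m' : Fin k, m < m' →
      FPT (x n (σ m)) (B (σ m)) < FPT (x n (σ m')) (B (σ m')) := by
    rw [eventually_all]
    intro m
    rw [eventually_all]
    intro m'
    by_cases h : m < m'
    · exact (key m m' h).mono fun n hn _ => hn
    · exact Eventually.of_forall fun n hn => absurd hn h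
  exact hall.mono fun n hn m m' h => hn m m' h
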